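/- If λ1, λ2 : [0,1] → [0,1] are non-increasing with λ^ξ strictly decreasing on (ᾱ^ξ, 1], λ^ξ(α) = 1 iff α ≤ ᾱ^ξ, continuous on (0,1], and ᾱ1 + ᾱ2 < 1, and if moreover λ1(1−ᾱ2) < lim_{α→ᾱ2+} λ2(α) and λ2(1−ᾱ1) < lim_{α→ᾱ1+} λ1(α), then the equation λ1(α) = λ2(1−α) has exactly one solution α* and α* ∈ (ᾱ1, 1−ᾱ2). -/

import Mathlib

/-- Queue growth rate minimization, case `ᾱ¹ + ᾱ² < 1` with no dominating
boundary: if `λ1, λ2 : [0,1] → [0,1]` are non-increasing, with `λ^ξ α = 1` iff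
`α ≤ ᾱ^ξ` (on `[0,1]`), strictly decreasing on `(ᾱ^ξ, 1]`, continuous on
`(0,1]`, `ᾱ¹ + ᾱ² < 1`, and
`λ1(1-ᾱ²) < lim_{α→ᾱ²⁺} λ2(α)` and `λ2(1-ᾱ¹) < lim_{α→ᾱ¹⁺} λ1(α)`,
then the balance equation `λ1 α = λ2 (1-α)` has exactly one solution `α*` in
`[0,1]`, and `α* ∈ (ᾱ¹, 1-ᾱ²)`. -/
theorem split_ratio_balance_unique
    (l1 l2 : ℝ → ℝ) (a1 a2 : ℝ)
    (ha1 : a1 ∈ Set.Icc (0:ℝ) 1) (ha2 : a2 ∈ Set.Icc (0:ℝ) 1)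
    (hsum : a1 + a2 < 1)
    (hm1 : AntitoneOn l1 (Set.Icc 0 1)) (hm2 : AntitoneOn l2 (Set.Icc 0 1))
    (hsa1 : StrictAntiOn l1 (Set.Ioc a1 1)) (hsa2 : StrictAntiOn l2 (Set.Ioc a2 1))
    (hmap1 : ∀ x ∈ Set.Icc (0:ℝ) 1, l1 x ∈ Set.Icc (0:ℝ) 1)
    (hmap2 : ∀ x ∈ Set.Icc (0:ℝ) 1, l2 x ∈ Set.Icc (0:ℝ) 1)
    (hiff1 : ∀ x ∈ Set.Icc (0:ℝ) 1, (l1 x = 1 ↔ x ≤ a1))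
    (hiff2 : ∀ x ∈ Set.Icc (0:ℝ) 1, (l2 x = 1 ↔ x ≤ a2))
    (hc1 : ContinuousOn l1 (Set.Ioc 0 1)) (hc2 : ContinuousOn l2 (Set.Ioc 0 1))
    (L1 L2 : ℝ)
    (hL1 : Filter.Tendsto l1 (nhdsWithin a1 (Set.Ioi a1)) (nhds L1))
    (hL2 : Filter.Tendsto l2 (nhdsWithin a2 (Set.Ioi a2)) (nhds L2))
    (hlt1 : l1 (1 - a2) < L2) (hlt2 : l2 (1 - a1) < L1) :
    ∃ α : ℝ, α ∈ Set.Ioo a1 (1 - a2) ∧ l1 α = l2 (1 - α) ∧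
      ∀ β ∈ Set.Icc (0:ℝ) 1, l1 β = l2 (1 - β) → β = α := by

  obtain ⟨ha10, ha11⟩ := ha1
  obtain ⟨ha20, ha21⟩ := ha2
  have hab : a1 < 1 - a2 := by linarith
  have hb0 : (0:ℝ) < 1 - a2 := by linarith
  have hb1 : (1:ℝ) - a2 ≤ 1 := by linarith
  -- any solution in [0,1] lies in (a1, 1-a2)
  have sol_mem : ∀ β ∈ Set.Icc (0:ℝ) 1, l1 β = l2 (1 - β) → β ∈ Set.Ioo a1 (1 - a2) := by
    intro β hβ heq
    have hβ' : (1:ℝ) - β ∈ Set.Icc (0:ℝ) 1 := ⟨by linarith [hβ.2], by linarith [hβ.1]⟩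
    constructor
    · by_contra h
      push_neg at h
      have h1 : l1 β = 1 := (hiff1 β hβ).mpr h
      have h2 : l2 (1 - β) = 1 := by rw [← heq]; exact h1
      have h3 : 1 - β ≤ a2 := (hiff2 _ hβ').mp h2
      linarith
    · by_contra h
      push_neg at h
      have h2 : l2 (1 - β) = 1 := (hiff2 _ hβ').mpr (by linarith)
      have h1 : l1 β = 1 := by rw [heq]; exact h2
      have h3 : β ≤ a1 := (hiff1 β hβ).mp h1
      linarith
  have mem1 : ∀ z ∈ Set.Ioo a1 (1 - a2), z ∈ Set.Ioc a1 1 :=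
    fun z hz => ⟨hz.1, by linarith [hz.2]⟩
  have mem2 : ∀ z ∈ Set.Ioo a1 (1 - a2), (1 - z) ∈ Set.Ioc a2 1 :=
    fun z hz => ⟨by linarith [hz.2], by linarith [hz.1]⟩
  -- uniqueness within (a1, 1-a2)
  have key : ∀ x ∈ Set.Ioo a1 (1 - a2), ∀ y ∈ Set.Ioo a1 (1 - a2),
      l1 x = l2 (1 - x) → l1 y = l2 (1 - y) → x = y := by
    intro x hx y hy hex hey
    rcases lt_trichotomy x y with h | h | h
    · exfalso
      have h1 : l1 y < l1 x := hsa1 (mem1 x hx) (mem1 y hy) h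
      have h2 : l2 (1 - x) < l2 (1 - y) := hsa2 (mem2 y hy) (mem2 x hx) (by linarith)
      linarith
    · exact h
    · exfalso
      have h1 : l1 x < l1 y := hsa1 (mem1 y hy) (mem1 x hx) h
      have h2 : l2 (1 - y) < l2 (1 - x) := hsa2 (mem2 x hx) (mem2 y hy) (by linarith)
      linarith
  -- find α0 ∈ (a1, 1-a2) with l2 (1-α0) < l1 α0
  have hcomp1 : Filter.Tendsto (fun α => l2 (1 - α)) (nhdsWithin a1 (Set.Ioi a1))
      (nhds (l2 (1 - a1))) := by
    have hmem : (1:ℝ) - a1 ∈ Set.Ioc (0:ℝ) 1 := ⟨by linarith, by linarith⟩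
    have hcw : Filter.Tendsto l2 (nhdsWithin (1 - a1) (Set.Ioc 0 1)) (nhds (l2 (1 - a1))) :=
      hc2 _ hmem
    refine hcw.comp ?_
    rw [tendsto_nhdsWithin_iff]
    constructor
    · exact ((continuous_const.sub continuous_id).tendsto a1).mono_left nhdsWithin_le_nhds
    · have hIoo : Set.Ioo a1 1 ∈ nhdsWithin a1 (Set.Ioi a1) :=
        Ioo_mem_nhdsGT_of_mem ⟨le_refl a1, by linarith⟩
      filter_upwards [hIoo] with α hα
      exact ⟨by linarith [hα.2], by linarith [hα.1]⟩
  have hev1 : ∀ᶠ α in nhdsWithin a1 (Set.Ioi a1), l2 (1 - α) < l1 α :=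
    hcomp1.eventually_lt hL1 hlt2
  have hev1' : Set.Ioo a1 (1 - a2) ∈ nhdsWithin a1 (Set.Ioi a1) :=
    Ioo_mem_nhdsGT_of_mem ⟨le_refl a1, hab⟩
  obtain ⟨α0, hgα0, (hα0 : α0 ∈ Set.Ioo a1 (1 - a2))⟩ := (hev1.and hev1').exists
  -- find α1 ∈ (α0, 1-a2) with l1 α1 < l2 (1-α1)
  have hcomp2 : Filter.Tendsto (fun α => l2 (1 - α)) (nhdsWithin (1 - a2) (Set.Iio (1 - a2)))
      (nhds L2) := by
    refine hL2.comp ?_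
    rw [tendsto_nhdsWithin_iff]
    constructor
    · have h : Filter.Tendsto (fun α : ℝ => 1 - α) (nhds (1 - a2)) (nhds a2) := by
        have : Filter.Tendsto (fun α : ℝ => 1 - α) (nhds (1 - a2)) (nhds (1 - (1 - a2))) :=
          (continuous_const.sub continuous_id).tendsto (1 - a2)
        simpa using this
      exact h.mono_left nhdsWithin_le_nhds
    · filter_upwards [self_mem_nhdsWithin] with α (hα : α < 1 - a2)
      exact Set.mem_Ioi.mpr (by linarith)
  have hl1b : Filter.Tendsto l1 (nhdsWithin (1 - a2) (Set.Iio (1 - a2)))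
      (nhds (l1 (1 - a2))) := by
    have hcw : Filter.Tendsto l1 (nhdsWithin (1 - a2) (Set.Ioc 0 1)) (nhds (l1 (1 - a2))) :=
      hc1 _ ⟨hb0, hb1⟩
    refine hcw.mono_left ?_
    rw [← nhdsWithin_Ioo_eq_nhdsLT hb0]
    exact nhdsWithin_mono _ (fun x hx => ⟨hx.1, by linarith [hx.2]⟩)
  have hev2 : ∀ᶠ α in nhdsWithin (1 - a2) (Set.Iio (1 - a2)), l1 α < l2 (1 - α) :=
    hl1b.eventually_lt hcomp2 hlt1
  have hev2' : Set.Ioo α0 (1 - a2) ∈ nhdsWithin (1 - a2) (Set.Iio (1 - a2)) :=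
    Ioo_mem_nhdsLT_of_mem ⟨hα0.2, le_refl _⟩
  obtain ⟨α1, hgα1, (hα1 : α1 ∈ Set.Ioo α0 (1 - a2))⟩ := (hev2.and hev2').exists
  have h01 : α0 ≤ α1 := le_of_lt hα1.1
  -- IVT on [α0, α1]
  have hsub1 : Set.Icc α0 α1 ⊆ Set.Ioc 0 1 := fun x hx =>
    ⟨by linarith [hx.1, hα0.1], by linarith [hx.2, hα1.2]⟩
  have hgc : ContinuousOn (fun α => l1 α - l2 (1 - α)) (Set.Icc α0 α1) := by
    refine ContinuousOn.sub (hc1.mono hsub1) ?_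
    refine hc2.comp ((continuous_const.sub continuous_id).continuousOn) ?_
    intro x hx
    exact ⟨by linarith [hx.2, hα1.2], by linarith [hx.1, hα0.1]⟩
  have hivt := intermediate_value_Icc' h01 hgc
  have h0mem : (0:ℝ) ∈ Set.Icc (l1 α1 - l2 (1 - α1)) (l1 α0 - l2 (1 - α0)) :=
    ⟨by linarith, by linarith⟩
  obtain ⟨α, hαmem, hgα⟩ := hivt h0mem
  have hαIoo : α ∈ Set.Ioo a1 (1 - a2) :=
    ⟨lt_of_lt_of_le hα0.1 hαmem.1, lt_of_le_of_lt hαmem.2 hα1.2⟩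
  have heq : l1 α = l2 (1 - α) := by
    have := hgα
    simp only at this
    linarith
  refine ⟨α, hαIoo, heq, ?_⟩
  intro β hβ hβeq
  exact key β (sol_mem β hβ hβeq) α hαIoo hβeq heq
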